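/- (Pointwise transformation identity for the convective term.) Let h¹, h² be positive twice continuously differentiable real functions of y₁, and let u, ψ be continuously differentiable vector fields on an open subset of ℝ². Then at every point y = (y₁,y₂): h¹·( Rᵀ𝕁⁻¹·((F_{h¹}u)·∇)u )·ψ = ((h²)²/h¹)·( ((F_{h²}Ru)·∇)(Ru) )·(Rψ) − ((h²)²/h¹)·( (((F_{h²}Ru)·∇)R)·u )·(Rψ), where for a vector field w, ((w)·∇)z denotes the directional derivative of the vector field z along w (componentwise w₁∂_{y₁}z_i + w₂∂_{y₂}z_i), and ((w)·∇)R denotes the 2×2 matrix obtained by applying this directional derivative to each entry of R. -/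

import Mathlib

set_option maxHeartbeats 2000000


open Matrix

/-- Partial derivative with respect to the first coordinate. -/
noncomputable def pd1 (f : ℝ × ℝ → ℝ) (y : ℝ × ℝ) : ℝ :=
  deriv (fun t => f (t, y.2)) y.1

/-- Partial derivative with respect to the second coordinate. -/
noncomputable def pd2 (f : ℝ × ℝ → ℝ) (y : ℝ × ℝ) : ℝ :=
  deriv (fun t => f (y.1, t)) y.2

/-- Directional derivative `((w·∇)f)(y) = w₁∂_{y₁}f + w₂∂_{y₂}f` of a scalar
function `f` along the vector field `w = (w1, w2)`. -/
noncomputable def dirD (w1 w2 : ℝ × ℝ → ℝ) (f : ℝ × ℝ → ℝ) (y : ℝ × ℝ) : ℝ :=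
  w1 y * pd1 f y + w2 y * pd2 f y

/-- First component of `F_h·u` with `F_h = (1/2)[[1,0],[−(y₂/h)∂h, 1/h]]`. -/
noncomputable def FuFst (u1 : ℝ × ℝ → ℝ) : ℝ × ℝ → ℝ :=
  fun z => (1 / 2) * u1 z

/-- Second component of `F_h·u`. -/
noncomputable def FuSnd (h : ℝ → ℝ) (u1 u2 : ℝ × ℝ → ℝ) : ℝ × ℝ → ℝ :=
  fun z => (1 / 2) * (-(z.2 / h z.1) * deriv h z.1 * u1 z + u2 z / h z.1)

/-- First component of `Ru`. -/
noncomputable def RuFst (h1 h2 : ℝ → ℝ) (u1 : ℝ × ℝ → ℝ) : ℝ × ℝ → ℝ :=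
  fun z => h1 z.1 / h2 z.1 * u1 z

/-- Second component of `Ru`. -/
noncomputable def RuSnd (h1 h2 : ℝ → ℝ) (u1 u2 : ℝ × ℝ → ℝ) : ℝ × ℝ → ℝ :=
  fun z => u2 z - z.2 * h2 z.1 * deriv (fun x => h1 x / h2 x) z.1 * u1 z

/-- pointwise transformation identity for the convective term:
`h¹·(Rᵀ𝕁⁻¹·((F_{h¹}u)·∇)u)·ψ
  = ((h²)²/h¹)·(((F_{h²}Ru)·∇)(Ru))·(Rψ) − ((h²)²/h¹)·((((F_{h²}Ru)·∇)R)·u)·(Rψ)`. -/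
theorem convective_transform
    (h1 h2 : ℝ → ℝ) (u1 u2 p1 p2 : ℝ × ℝ → ℝ) (s : Set (ℝ × ℝ)) (hs : IsOpen s)
    (h1pos : ∀ x, 0 < h1 x) (h2pos : ∀ x, 0 < h2 x)
    (h1c : ContDiff ℝ 2 h1) (h2c : ContDiff ℝ 2 h2)
    (hu1 : ContDiffOn ℝ 1 u1 s) (hu2 : ContDiffOn ℝ 1 u2 s)
    (hp1 : ContDiffOn ℝ 1 p1 s) (hp2 : ContDiffOn ℝ 1 p2 s) :
    ∀ y ∈ s,
      let R : Matrix (Fin 2) (Fin 2) ℝ :=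
        !![h1 y.1 / h2 y.1, 0;
           -y.2 * h2 y.1 * deriv (fun x => h1 x / h2 x) y.1, 1]
      let Jinv : Matrix (Fin 2) (Fin 2) ℝ :=
        !![1, 0; y.2 * h1 y.1 * deriv (fun x => h2 x / h1 x) y.1, h2 y.1 / h1 y.1]
      -- the vector field `w = F_{h¹}u`
      let w1 := FuFst u1
      let w2 := FuSnd h1 u1 u2
      -- the vector field `W = F_{h²}(Ru)`
      let W1 := FuFst (RuFst h1 h2 u1)
      let W2 := FuSnd h2 (RuFst h1 h2 u1) (RuSnd h1 h2 u1 u2)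
      -- `((F_{h²}Ru)·∇)R`, entrywise directional derivative of `R`
      let DR : Matrix (Fin 2) (Fin 2) ℝ :=
        !![dirD W1 W2 (fun z => h1 z.1 / h2 z.1) y, dirD W1 W2 (fun _ => (0:ℝ)) y;
           dirD W1 W2 (fun z => -z.2 * h2 z.1 * deriv (fun x => h1 x / h2 x) z.1) y,
           dirD W1 W2 (fun _ => (1:ℝ)) y]
      -- `Rψ` at `y`
      let Rpsi : Fin 2 → ℝ :=
        ![h1 y.1 / h2 y.1 * p1 y,
          p2 y - y.2 * h2 y.1 * deriv (fun x => h1 x / h2 x) y.1 * p1 y]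
      h1 y.1 *
          ((Rᵀ * Jinv).mulVec ![dirD w1 w2 u1 y, dirD w1 w2 u2 y] ⬝ᵥ ![p1 y, p2 y])
        = (h2 y.1) ^ 2 / h1 y.1 *
            (![dirD W1 W2 (RuFst h1 h2 u1) y, dirD W1 W2 (RuSnd h1 h2 u1 u2) y] ⬝ᵥ Rpsi)
          - (h2 y.1) ^ 2 / h1 y.1 * (DR.mulVec ![u1 y, u2 y] ⬝ᵥ Rpsi) := by
  intro y hy
  have ha : h1 y.1 ≠ 0 := (h1pos y.1).ne'
  have hb : h2 y.1 ≠ 0 := (h2pos y.1).ne'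
  have h1d : Differentiable ℝ h1 := h1c.differentiable (by norm_num)
  have h2d : Differentiable ℝ h2 := h2c.differentiable (by norm_num)
  have hqc : ContDiff ℝ 2 (fun x => h1 x / h2 x) :=
    h1c.div h2c (fun x => (h2pos x).ne')
  have hqd : Differentiable ℝ (fun x => h1 x / h2 x) := hqc.differentiable (by norm_num)
  have hq' : Differentiable ℝ (deriv (fun x => h1 x / h2 x)) := by
    have h := (contDiff_succ_iff_deriv.mp
      (show ContDiff ℝ ((1 : ℕ) + 1) (fun x => h1 x / h2 x) by exact_mod_cast hqc)).2.2
    exact h.differentiable (by norm_num)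
  have mem : s ∈ nhds y := hs.mem_nhds hy
  have du1 : DifferentiableAt ℝ u1 y := (hu1.differentiableOn (by norm_num)).differentiableAt mem
  have du2 : DifferentiableAt ℝ u2 y := (hu2.differentiableOn (by norm_num)).differentiableAt mem
  have hc1 : DifferentiableAt ℝ (fun t : ℝ => (t, y.2)) y.1 :=
    differentiableAt_id.prodMk (differentiableAt_const _)
  have hc2 : DifferentiableAt ℝ (fun t : ℝ => (y.1, t)) y.2 :=
    (differentiableAt_const _).prodMk differentiableAt_id
  have su1 : DifferentiableAt ℝ (fun t => u1 (t, y.2)) y.1 := du1.comp y.1 hc1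
  have su2 : DifferentiableAt ℝ (fun t => u2 (t, y.2)) y.1 := du2.comp y.1 hc1
  have su1' : DifferentiableAt ℝ (fun t => u1 (y.1, t)) y.2 := du1.comp y.2 hc2
  have su2' : DifferentiableAt ℝ (fun t => u2 (y.1, t)) y.2 := du2.comp y.2 hc2
  have hr : deriv (fun x => h1 x / h2 x) y.1
      = (deriv h1 y.1 * h2 y.1 - h1 y.1 * deriv h2 y.1) / h2 y.1 ^ 2 :=
    deriv_div (h1d.differentiableAt) (h2d.differentiableAt) hb
  have hsv : deriv (fun x => h2 x / h1 x) y.1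
      = (deriv h2 y.1 * h1 y.1 - h2 y.1 * deriv h1 y.1) / h1 y.1 ^ 2 :=
    deriv_div (h2d.differentiableAt) (h1d.differentiableAt) ha
  have e2 : deriv (fun t => h1 t / h2 t * u1 (t, y.2)) y.1
      = deriv (fun x => h1 x / h2 x) y.1 * u1 y
        + h1 y.1 / h2 y.1 * deriv (fun t => u1 (t, y.2)) y.1 :=
    ((hqd y.1).hasDerivAt.mul su1.hasDerivAt).deriv
  have e3 : deriv (fun t => h1 y.1 / h2 y.1 * u1 (y.1, t)) y.2
      = h1 y.1 / h2 y.1 * deriv (fun t => u1 (y.1, t)) y.2 :=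
    (su1'.hasDerivAt.const_mul (h1 y.1 / h2 y.1)).deriv
  have e4 : deriv (fun t => u2 (t, y.2)
        - y.2 * h2 t * deriv (fun x => h1 x / h2 x) t * u1 (t, y.2)) y.1
      = deriv (fun t => u2 (t, y.2)) y.1
        - (((0 * h2 y.1 + y.2 * deriv h2 y.1) * deriv (fun x => h1 x / h2 x) y.1
              + y.2 * h2 y.1 * deriv (deriv (fun x => h1 x / h2 x)) y.1) * u1 y
            + y.2 * h2 y.1 * deriv (fun x => h1 x / h2 x) y.1
              * deriv (fun t => u1 (t, y.2)) y.1) :=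
    (su2.hasDerivAt.sub ((((hasDerivAt_const y.1 y.2).mul (h2d y.1).hasDerivAt).mul
      (hq' y.1).hasDerivAt).mul su1.hasDerivAt)).deriv
  have e5 : deriv (fun t => u2 (y.1, t)
        - t * h2 y.1 * deriv (fun x => h1 x / h2 x) y.1 * u1 (y.1, t)) y.2
      = deriv (fun t => u2 (y.1, t)) y.2
        - ((1 * h2 y.1 * deriv (fun x => h1 x / h2 x) y.1) * u1 y
            + y.2 * h2 y.1 * deriv (fun x => h1 x / h2 x) y.1
              * deriv (fun t => u1 (y.1, t)) y.2) :=
    (su2'.hasDerivAt.sub ((((hasDerivAt_id y.2).mul_const (h2 y.1)).mul_const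
      (deriv (fun x => h1 x / h2 x) y.1)).mul su1'.hasDerivAt)).deriv
  have e8 : deriv (fun t => -y.2 * h2 t * deriv (fun x => h1 x / h2 x) t) y.1
      = (0 * h2 y.1 + -y.2 * deriv h2 y.1) * deriv (fun x => h1 x / h2 x) y.1
        + -y.2 * h2 y.1 * deriv (deriv (fun x => h1 x / h2 x)) y.1 :=
    (((hasDerivAt_const y.1 (-y.2)).mul (h2d y.1).hasDerivAt).mul
      (hq' y.1).hasDerivAt).deriv
  have e9 : deriv (fun t => -t * h2 y.1 * deriv (fun x => h1 x / h2 x) y.1) y.2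
      = -1 * h2 y.1 * deriv (fun x => h1 x / h2 x) y.1 :=
    (((hasDerivAt_id y.2).neg.mul_const (h2 y.1)).mul_const
      (deriv (fun x => h1 x / h2 x) y.1)).deriv
  simp only [dirD, pd1, pd2, FuFst, FuSnd, RuFst, RuSnd, Matrix.mulVec,
    dotProduct, Fin.sum_univ_two, Matrix.mul_apply, Matrix.transpose_apply,
    Matrix.cons_val', Matrix.cons_val_zero, Matrix.cons_val_one, Matrix.head_cons,
    Matrix.empty_val', Matrix.of_apply, Matrix.cons_val_fin_one, Matrix.head_fin_const,
    deriv_const', deriv_const]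
  rw [e2, e3, e4, e5, e8, e9, hr, hsv]
  field_simp
  ring
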